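/- Let X be a finite connected pre-ordered set with at least 2 elements, R a 2-torsion free commutative ring with unity, and L a Lie triple derivation of I(X,R). Write L(e_{ij}) = Σ C^{ij}_{xy} e_{xy}. Then for every i ∈ X, L(e_{ii}) = Σ_{x<i} C^{ii}_{xi} e_{xi} + Σ_{x∈X} C^{ii}_{xx} e_{xx} + Σ_{y>i} C^{ii}_{iy} e_{iy}; that is, C^{ii}_{xy} = 0 whenever x ≠ i ≠ y and x < y. -/

import Mathlib

open IncidenceAlgebra
open scoped Classical

variable {R X : Type*}

/-- The matrix unit `e_{x y}` of the incidence algebra (zero if `¬ x ≤ y`). -/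
noncomputable def matrixUnit [CommRing R] [Preorder X] [DecidableEq X] (x y : X) :
    IncidenceAlgebra R X :=
  ⟨fun u v => if u = x ∧ v = y ∧ x ≤ y then 1 else 0, fun a b hab => by
    split_ifs with h
    · exact absurd (by rw [h.1, h.2.1]; exact h.2.2) hab
    · rfl⟩

/-- The Lie bracket `[f,g] = fg - gf`. -/
def lieBr {A : Type*} [Ring A] (f g : A) : A := f * g - g * f

/-- `L` is a Lie triple derivation of the incidence algebra. -/
def IsLieTripleDer [CommRing R] [Preorder X] [DecidableEq X] [LocallyFiniteOrder X]
    (L : IncidenceAlgebra R X →ₗ[R] IncidenceAlgebra R X) : Prop :=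
  ∀ f g h : IncidenceAlgebra R X,
    L (lieBr (lieBr f g) h) =
      lieBr (lieBr (L f) g) h + lieBr (lieBr f (L g)) h + lieBr (lieBr f g) (L h)

/-- `X` is connected: any two points are joined by a chain of comparabilities. -/
def OrdConnected' (X : Type*) [Preorder X] : Prop :=
  ∀ x y : X, Relation.ReflTransGen (fun a b : X => a ≤ b ∨ b ≤ a) x y

/-- `R` is 2-torsion free. -/
def TwoTorsionFree (R : Type*) [CommRing R] : Prop := ∀ r : R, r + r = 0 → r = 0


lemma matrixUnit_apply [CommRing R] [Preorder X] [DecidableEq X] (a b u v : X) :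
    (matrixUnit a b : IncidenceAlgebra R X) u v =
      if u = a ∧ v = b ∧ a ≤ b then 1 else 0 := rfl

lemma matrixUnit_diag_mul_apply [CommRing R] [Preorder X] [DecidableEq X]
    [LocallyFiniteOrder X] (a : X) (f : IncidenceAlgebra R X) (u v : X) :
    (matrixUnit a a * f : IncidenceAlgebra R X) u v = if u = a then f a v else 0 := by
  rw [IncidenceAlgebra.mul_apply]
  by_cases hu : u = a
  · subst hu
    by_cases hv : u ≤ v
    · rw [if_pos rfl]
      rw [Finset.sum_eq_single u]
      · simp [matrixUnit_apply]
      · intro w hw hwu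
        simp [matrixUnit_apply, hwu]
      · intro h; exact absurd (Finset.mem_Icc.2 ⟨le_refl u, hv⟩) h
    · rw [if_pos rfl, IncidenceAlgebra.apply_eq_zero_of_not_le hv]
      apply Finset.sum_eq_zero
      intro w hw
      rw [Finset.mem_Icc] at hw
      exact absurd hw.2 fun h => hv (le_trans hw.1 h)
  · rw [if_neg hu]
    apply Finset.sum_eq_zero
    intro w hw
    simp [matrixUnit_apply, hu]

lemma mul_matrixUnit_diag_apply [CommRing R] [Preorder X] [DecidableEq X]
    [LocallyFiniteOrder X] (a : X) (f : IncidenceAlgebra R X) (u v : X) :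
    (f * matrixUnit a a : IncidenceAlgebra R X) u v = if v = a then f u a else 0 := by
  rw [IncidenceAlgebra.mul_apply]
  by_cases hv : v = a
  · subst hv
    by_cases hu : u ≤ v
    · rw [if_pos rfl]
      rw [Finset.sum_eq_single v]
      · simp [matrixUnit_apply]
      · intro w hw hwv
        simp [matrixUnit_apply, hwv]
      · intro h; exact absurd (Finset.mem_Icc.2 ⟨hu, le_refl v⟩) h
    · rw [if_pos rfl, IncidenceAlgebra.apply_eq_zero_of_not_le hu]
      apply Finset.sum_eq_zero
      intro w hw
      rw [Finset.mem_Icc] at hw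
      exact absurd hw.1 fun h => hu (le_trans h hw.2)
  · rw [if_neg hv]
    apply Finset.sum_eq_zero
    intro w hw
    simp [matrixUnit_apply, hv]

/-- For a Lie triple derivation `L` of the incidence algebra of a finite
connected pre-ordered set with at least two elements (over a 2-torsion free commutative ring),
the coefficient `C^{ii}_{xy} = L(e_{ii})(x,y)` vanishes whenever `x ≠ i ≠ y` and `x < y`. -/
theorem lieTripleDer_diag_matrixUnit_coeff [CommRing R] [Preorder X] [DecidableEq X]
    [Fintype X] [LocallyFiniteOrder X]
    (htf : TwoTorsionFree R) (hconn : OrdConnected' X) (hcard : 1 < Fintype.card X)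
    (L : IncidenceAlgebra R X →ₗ[R] IncidenceAlgebra R X) (hL : IsLieTripleDer L) :
    ∀ i x y : X, x ≤ y → x ≠ y → x ≠ i → y ≠ i →
      L (matrixUnit i i) x y = 0 := by
  intro i x y hxy hne hxi hyi
  have key := hL (matrixUnit x x) (matrixUnit i i) (matrixUnit y y)
  have h0 : lieBr (matrixUnit x x) (matrixUnit i i) = (0 : IncidenceAlgebra R X) := by
    apply IncidenceAlgebra.ext
    intro a b _
    rw [lieBr, IncidenceAlgebra.sub_apply, matrixUnit_diag_mul_apply,
      mul_matrixUnit_diag_apply]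
    simp [matrixUnit_apply, hxi, Ne.symm hxi]
  rw [h0] at key
  have hz : lieBr (0 : IncidenceAlgebra R X) (matrixUnit y y) = 0 := by
    simp [lieBr]
  rw [hz, map_zero] at key
  have key2 := congr_fun (DFunLike.congr_fun key.symm x) y
  simpa only [lieBr, IncidenceAlgebra.add_apply, IncidenceAlgebra.sub_apply,
    IncidenceAlgebra.zero_apply, matrixUnit_diag_mul_apply, mul_matrixUnit_diag_apply,
    zero_mul, mul_zero, sub_zero, zero_sub, sub_self, add_zero, zero_add, if_pos rfl,
    eq_self_iff_true, if_true,
    if_neg hne, if_neg hne.symm, if_neg hxi, if_neg hyi, neg_zero,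
    if_neg (Ne.symm hxi), if_neg (Ne.symm hyi)] using key2
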